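/- Let c be a continuous function on [-h,0] with sup c < π²/(4h²), and let u ∈ C²((-h,0)) ∩ C([-h,0]) satisfy -u'' - c·u ≤ 0 on (-h,0), u(-h) = 0, and u(0) > 0. If additionally u is differentiable at 0, then u'(0) > 0. -/

import Mathlib

open Set Filter Topology

set_option maxHeartbeats 1000000

/-- Maximum principle lemma, part (i): if `sup c < π²/(4h²)`, `-u'' - c·u ≤ 0` on `(-h,0)`,
`u(-h) = 0` and `u(0) > 0`, then `u'(0) > 0`. -/
theorem stmt0 (h : ℝ) (hh : 0 < h) (c u u' u'' : ℝ → ℝ)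
    (hc : ContinuousOn c (Set.Icc (-h) 0))
    (hsup : sSup (c '' Set.Icc (-h) 0) < Real.pi ^ 2 / (4 * h ^ 2))
    (hu : ContinuousOn u (Set.Icc (-h) 0))
    (hder : ∀ y ∈ Set.Ioo (-h) 0, HasDerivAt u (u' y) y ∧ HasDerivAt u' (u'' y) y)
    (hineq : ∀ y ∈ Set.Ioo (-h) 0, -u'' y - c y * u y ≤ 0)
    (hbc : u (-h) = 0) (hpos : 0 < u 0)
    (hd0 : HasDerivWithinAt u (u' 0) (Set.Iic 0) 0) :
    0 < u' 0 := by
  have hπ := Real.pi_pos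
  set P := Real.pi ^ 2 / (4 * h ^ 2) with hP
  have hP0 : 0 < P := by positivity
  set S := sSup (c '' Set.Icc (-h) 0) with hS
  have hcS : ∀ y ∈ Set.Icc (-h) 0, c y ≤ S := fun y hy =>
    le_csSup (isCompact_Icc.image_of_continuousOn hc).bddAbove (Set.mem_image_of_mem _ hy)
  set t := (max S 0 + P) / 2 with ht
  have htP : t < P := by
    have : max S 0 < P := max_lt hsup hP0
    simp only [ht]; linarith
  have ht0 : 0 < t := by have := le_max_right S 0; simp only [ht]; linarith
  have htS : S < t := by have := le_max_left S 0; simp only [ht]; linarith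
  set q := Real.sqrt t with hq
  have hq0 : 0 < q := Real.sqrt_pos.mpr ht0
  have hq2 : q ^ 2 = t := Real.sq_sqrt ht0.le
  have hqh : q * h < Real.pi / 2 := by
    have h1 : q < Real.sqrt P := by
      rw [hq]; exact Real.sqrt_lt_sqrt ht0.le htP
    have h2 : Real.sqrt P = Real.pi / (2 * h) := by
      have : P = (Real.pi / (2 * h)) ^ 2 := by rw [hP]; field_simp; ring
      rw [this, Real.sqrt_sq (by positivity)]
    rw [h2] at h1
    rw [lt_div_iff₀ (by positivity)] at h1 ⊢ <;> nlinarith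
  set y₀ := (Real.pi / (2 * q) - h) / 2 with hy₀
  have hy₀0 : 0 < y₀ := by
    have : h < Real.pi / (2 * q) := by
      rw [lt_div_iff₀ (by positivity)]; nlinarith
    simp only [hy₀]; linarith
  have hqy₀ : q * y₀ = (Real.pi / 2 - q * h) / 2 := by
    rw [hy₀]; field_simp
  have hqhy : q * (h + y₀) < Real.pi / 2 := by nlinarith
  have hqy₀pos : 0 < q * y₀ := mul_pos hq0 hy₀0
  set w : ℝ → ℝ := fun y => Real.cos (q * (y - y₀)) with hw
  set w' : ℝ → ℝ := fun y => -Real.sin (q * (y - y₀)) * q with hw'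
  have hlin : ∀ y : ℝ, HasDerivAt (fun y => q * (y - y₀)) q y := by
    intro y
    simpa using ((hasDerivAt_id y).sub_const y₀).const_mul q
  have hwder : ∀ y : ℝ, HasDerivAt w (w' y) y := fun y => (hlin y).cos
  have hw'der : ∀ y : ℝ, HasDerivAt w' (-(q ^ 2) * w y) y := by
    intro y
    have := (((hlin y).sin).neg).mul_const q
    rw [show -(q ^ 2) * w y = -(Real.cos (q * (y - y₀)) * q) * q by simp only [hw]; ring]
    exact this
  have hwpos : ∀ y ∈ Set.Icc (-h) 0, 0 < w y := by
    intro y hy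
    apply Real.cos_pos_of_mem_Ioo
    constructor
    · have : q * (-h - y₀) ≤ q * (y - y₀) :=
        mul_le_mul_of_nonneg_left (by linarith [hy.1]) hq0.le
      nlinarith
    · have : q * (y - y₀) ≤ q * (0 - y₀) :=
        mul_le_mul_of_nonneg_left (by linarith [hy.2]) hq0.le
      nlinarith
  have hw'0 : 0 < w' 0 := by
    have h1 : q * ((0 : ℝ) - y₀) = -(q * y₀) := by ring
    have h2 : 0 < Real.sin (q * y₀) :=
      Real.sin_pos_of_pos_of_lt_pi hqy₀pos (by nlinarith)
    simp only [hw', h1, Real.sin_neg, neg_neg]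
    positivity
  have hw0 : 0 < w 0 := hwpos 0 ⟨by linarith, le_refl 0⟩
  set M := u 0 / w 0 with hM
  have hM0 : 0 < M := div_pos hpos hw0
  have hwcont : Continuous w := Real.continuous_cos.comp (continuous_const.mul (continuous_id.sub continuous_const))
  -- key claim
  have key : ∀ y ∈ Set.Icc (-h) 0, u y ≤ M * w y := by
    have hvcont : ContinuousOn (fun y => u y / w y) (Set.Icc (-h) 0) :=
      hu.div hwcont.continuousOn fun y hy => (hwpos y hy).ne'
    obtain ⟨x₀, hx₀mem, hx₀max⟩ :=
      isCompact_Icc.exists_isMaxOn ⟨0, by constructor <;> linarith⟩ hvcont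
    set K := u x₀ / w x₀ with hK
    by_cases hKM : K ≤ M
    · intro y hy
      have h1 : u y / w y ≤ K := hx₀max hy
      have h2 : u y / w y ≤ M := h1.trans hKM
      rw [div_le_iff₀ (hwpos y hy)] at h2
      linarith
    · exfalso
      push_neg at hKM
      have hK0 : 0 < K := hM0.trans hKM
      have hx₀Ioo : x₀ ∈ Set.Ioo (-h) 0 := by
        rcases hx₀mem.1.lt_or_eq with h1 | h1
        · rcases hx₀mem.2.lt_or_eq with h2 | h2
          · exact ⟨h1, h2⟩
          · exfalso; rw [hK, h2] at hKM; exact absurd hKM (lt_irrefl M)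
        · exfalso
          rw [hK, ← h1, hbc, zero_div] at hK0
          exact lt_irrefl 0 hK0
      set g : ℝ → ℝ := fun y => u y - K * w y with hg
      have hgx₀ : g x₀ = 0 := by
        simp only [hg, hK]
        rw [div_mul_cancel₀ _ (hwpos x₀ hx₀mem).ne']
        ring
      have hgle : ∀ y ∈ Set.Icc (-h) 0, g y ≤ 0 := by
        intro y hy
        have h1 : u y / w y ≤ K := hx₀max hy
        rw [div_le_iff₀ (hwpos y hy)] at h1
        simp only [hg]; linarith
      -- local max at x₀
      have hloc : IsLocalMax g x₀ := by
        have : Set.Icc (-h) 0 ∈ 𝓝 x₀ :=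
          mem_of_superset (isOpen_Ioo.mem_nhds hx₀Ioo) Set.Ioo_subset_Icc_self
        filter_upwards [this] with y hy
        rw [hgx₀]; exact hgle y hy
      have hgder : ∀ y ∈ Set.Ioo (-h) 0, HasDerivAt g (u' y - K * w' y) y :=
        fun y hy => ((hder y hy).1).sub ((hwder y).const_mul K)
      have hG'x₀ : u' x₀ - K * w' x₀ = 0 :=
        hloc.hasDerivAt_eq_zero (hgder x₀ hx₀Ioo)
      set G' : ℝ → ℝ := fun y => u' y - K * w' y with hG'
      have hG'der : HasDerivAt G' (u'' x₀ - K * (-(q ^ 2) * w x₀)) x₀ :=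
        ((hder x₀ hx₀Ioo).2).sub ((hw'der x₀).const_mul K)
      have hux₀ : u x₀ = K * w x₀ := by
        have := hgx₀; simp only [hg] at this; linarith
      have hD : 0 < u'' x₀ - K * (-(q ^ 2) * w x₀) := by
        have h1 := hineq x₀ hx₀Ioo
        have h2 := hcS x₀ hx₀mem
        have h3 := hwpos x₀ hx₀mem
        have hq2c : c x₀ < q ^ 2 := by rw [hq2]; exact lt_of_le_of_lt h2 htS
        have h4 : -u'' x₀ ≤ c x₀ * (K * w x₀) := by rw [← hux₀]; linarith
        have h5 : 0 < K * w x₀ * (q ^ 2 - c x₀) :=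
          mul_pos (mul_pos hK0 h3) (sub_pos.mpr hq2c)
        linarith [h4, h5]
      -- G' positive just right of x₀
      have hslope := hasDerivAt_iff_tendsto_slope.mp hG'der
      have hev : ∀ᶠ y in 𝓝[>] x₀, 0 < G' y ∧ y < 0 := by
        have h1 : ∀ᶠ y in 𝓝[>] x₀, 0 < slope G' x₀ y := by
          apply (hslope.mono_left (nhdsWithin_mono _ fun y hy => ?_)).eventually
            (eventually_gt_nhds hD)
          simp only [Set.mem_compl_iff, Set.mem_singleton_iff]
          exact (Set.mem_Ioi.mp hy).ne'
        have h2 : ∀ᶠ y in 𝓝[>] x₀, y < 0 :=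
          eventually_nhdsWithin_of_eventually_nhds (eventually_lt_nhds hx₀Ioo.2)
        filter_upwards [h1, h2, self_mem_nhdsWithin] with y hy1 hy2 hy3
        refine ⟨?_, hy2⟩
        have hyx : 0 < y - x₀ := sub_pos.mpr hy3
        have hGx0 : G' x₀ = 0 := hG'x₀
        have : slope G' x₀ y = G' y / (y - x₀) := by
          simp [slope, hGx0, div_eq_inv_mul]
        rw [this, lt_div_iff₀ hyx] at hy1
        linarith
      obtain ⟨b, hb, hIoc⟩ := mem_nhdsGT_iff_exists_Ioc_subset.mp hev
      have hbmem := hIoc (Set.mem_Ioc.mpr ⟨hb, le_refl b⟩)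
      have hsub : Set.Icc x₀ b ⊆ Set.Ioo (-h) 0 := fun y hy =>
        ⟨lt_of_lt_of_le hx₀Ioo.1 hy.1, lt_of_le_of_lt hy.2 hbmem.2⟩
      have hmono : StrictMonoOn g (Set.Icc x₀ b) := by
        apply strictMonoOn_of_deriv_pos (convex_Icc x₀ b)
        · exact fun y hy => ((hgder y (hsub hy)).continuousAt).continuousWithinAt
        · intro y hy
          rw [interior_Icc] at hy
          rw [(hgder y (hsub ⟨hy.1.le, hy.2.le⟩)).deriv]
          exact (hIoc ⟨hy.1, hy.2.le⟩).1
      have hgb : 0 < g b := by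
        rw [← hgx₀]
        exact hmono (Set.left_mem_Icc.mpr hb.le) (Set.mem_Icc.mpr ⟨hb.le, le_refl b⟩) hb
      have := hgle b ⟨(hsub (Set.mem_Icc.mpr ⟨hb.le, le_refl b⟩)).1.le,
        (hsub (Set.mem_Icc.mpr ⟨hb.le, le_refl b⟩)).2.le⟩
      linarith
  -- conclude
  set φ : ℝ → ℝ := fun y => u y - M * w y with hφ
  have hφ0 : φ 0 = 0 := by
    simp only [hφ, hM]
    rw [div_mul_cancel₀ _ hw0.ne']; ring
  have hφder : HasDerivWithinAt φ (u' 0 - M * w' 0) (Set.Iic 0) 0 :=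
    hd0.sub (((hwder 0).const_mul M).hasDerivWithinAt)
  have hslope := hasDerivWithinAt_iff_tendsto_slope.mp hφder
  have hmem : Set.Iic (0 : ℝ) \ {0} = Set.Iio 0 := by
    ext y; simp [lt_iff_le_and_ne]
  rw [hmem] at hslope
  have hev : ∀ᶠ y in 𝓝[<] (0 : ℝ), 0 ≤ slope φ 0 y := by
    have h1 : Set.Ioo (-h) (0 : ℝ) ∈ 𝓝[<] (0 : ℝ) :=
      Ioo_mem_nhdsLT_of_mem ⟨by linarith, le_refl 0⟩
    filter_upwards [h1, self_mem_nhdsWithin] with y hy hy'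
    have hφy : φ y ≤ 0 := by
      have := key y ⟨hy.1.le, hy.2.le⟩
      simp only [hφ]; linarith
    have : slope φ 0 y = φ y / y := by simp [slope, hφ0, div_eq_inv_mul]
    rw [this]
    exact div_nonneg_iff.mpr (Or.inr ⟨hφy, le_of_lt hy'⟩)
  have h0 : 0 ≤ u' 0 - M * w' 0 := ge_of_tendsto hslope hev
  nlinarith
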